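/- Let 0 < α < 1, let ξ ∈ (0, 1], and let f: [0,1] → ℝ be measurable. Then ∫₀^ξ (ξ − η)^{−α−1} ( ∫_η^ξ |f(γ)| (γ − η)^{−α} dγ ) dη ≤ B(2α, 1−α) · ∫₀^ξ |f(γ)| (ξ − γ)^{−2α} dγ, as an inequality in [0, ∞]. -/

import Mathlib

open MeasureTheory Set

lemma lint_cov_1d {s : Set ℝ} {φ φ' : ℝ → ℝ} (hs : MeasurableSet s)
    (h : ∀ x ∈ s, HasDerivWithinAt φ (φ' x) s x) (hinj : InjOn φ s) (g : ℝ → ENNReal) :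
    ∫⁻ x in φ '' s, g x = ∫⁻ x in s, ENNReal.ofReal |φ' x| * g (φ x) := by
  simpa only [ContinuousLinearMap.det_toSpanSingleton] using
    lintegral_image_eq_lintegral_abs_det_fderiv_mul volume hs
      (fun x hx => (h x hx).hasFDerivWithinAt) hinj g

lemma inner_bound (α ξ γ : ℝ) (hα : 0 < α) (hγ0 : 0 < γ) (hγξ : γ < ξ) :
    (∫⁻ η in Ioo (0:ℝ) γ,
        ENNReal.ofReal ((ξ - η) ^ (-α - 1)) * ENNReal.ofReal ((γ - η) ^ (-α))) ≤
      (∫⁻ x in Ioi (0:ℝ), ENNReal.ofReal (x ^ (-α) * (1 + x) ^ (-1 - α))) *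
        ENNReal.ofReal ((ξ - γ) ^ (-(2 * α))) := by
  set c : ℝ := ξ - γ with hc
  have hc0 : 0 < c := by simp only [hc]; linarith
  set φ : ℝ → ℝ := fun x => γ - c * x with hφ
  have himg : φ '' Ioo 0 (γ / c) = Ioo 0 γ := by
    ext y
    constructor
    · rintro ⟨x, ⟨hx0, hx1⟩, rfl⟩
      have h1 : c * x < γ := by rw [mul_comm]; exact (lt_div_iff₀ hc0).mp hx1
      have h2 : 0 < c * x := mul_pos hc0 hx0
      exact ⟨by simp only [φ]; linarith, by simp only [φ]; linarith⟩
    · rintro ⟨hy0, hy1⟩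
      refine ⟨(γ - y) / c, ⟨div_pos (by linarith) hc0, by gcongr; linarith⟩, ?_⟩
      simp only [φ]
      field_simp
      ring
  have hderiv : ∀ x ∈ Ioo (0:ℝ) (γ / c), HasDerivWithinAt φ (-c) (Ioo (0:ℝ) (γ / c)) x := by
    intro x hx
    have : HasDerivAt φ (-c) x := by
      simpa using ((hasDerivAt_id x).const_mul c).const_sub γ
    exact this.hasDerivWithinAt
  have hinj : InjOn φ (Ioo (0:ℝ) (γ / c)) := by
    intro a _ b _ hab
    have : c * a = c * b := by simp only [φ] at hab; linarith
    exact mul_left_cancel₀ hc0.ne' this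
  rw [← himg, lint_cov_1d measurableSet_Ioo hderiv hinj]
  have hcong : ∫⁻ x in Ioo (0:ℝ) (γ / c),
      ENNReal.ofReal |(-c)| *
        (ENNReal.ofReal ((ξ - φ x) ^ (-α - 1)) * ENNReal.ofReal ((γ - φ x) ^ (-α)))
      = ∫⁻ x in Ioo (0:ℝ) (γ / c),
        ENNReal.ofReal (c ^ (-(2 * α))) * ENNReal.ofReal (x ^ (-α) * (1 + x) ^ (-1 - α)) := by
    apply setLIntegral_congr_fun measurableSet_Ioo
    intro x hx
    beta_reduce
    obtain ⟨hx0, _⟩ := hx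
    have e1 : ξ - φ x = c * (1 + x) := by simp only [φ, hc]; ring
    have e2 : γ - φ x = c * x := by simp only [φ]; ring
    rw [e1, e2, abs_neg, abs_of_pos hc0,
      Real.mul_rpow hc0.le (by linarith), Real.mul_rpow hc0.le hx0.le,
      ← ENNReal.ofReal_mul (mul_nonneg (Real.rpow_nonneg hc0.le _)
        (Real.rpow_nonneg (by linarith) _)),
      ← ENNReal.ofReal_mul hc0.le]
    have e3 : c * (c ^ (-α - 1) * (1 + x) ^ (-α - 1) * (c ^ (-α) * x ^ (-α)))
        = c ^ (-(2 * α)) * (x ^ (-α) * (1 + x) ^ (-1 - α)) := by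
      have e4 : c * (c ^ (-α - 1) * (1 + x) ^ (-α - 1) * (c ^ (-α) * x ^ (-α)))
          = (c ^ (1:ℝ) * c ^ (-α - 1) * c ^ (-α)) * ((1 + x) ^ (-α - 1) * x ^ (-α)) := by
        rw [Real.rpow_one]; ring
      rw [e4, ← Real.rpow_add hc0, ← Real.rpow_add hc0,
        show (1:ℝ) + (-α - 1) + (-α) = -(2 * α) from by ring,
        show (-α - 1 : ℝ) = -1 - α from by ring]
      ring
    rw [e3, ENNReal.ofReal_mul (Real.rpow_nonneg hc0.le _)]
  rw [hcong, lintegral_const_mul]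
  · rw [mul_comm]
    gcongr
    exact Ioo_subset_Ioi_self
  · exact (((measurable_id.pow measurable_const).mul
      ((measurable_const.add measurable_id).pow measurable_const)).ennreal_ofReal)

theorem stmt_2 (α ξ : ℝ) (hα : 0 < α) (hα1 : α < 1) (hξ0 : 0 < ξ) (hξ1 : ξ ≤ 1)
    (f : ℝ → ℝ) (hf : Measurable f) :
    (∫⁻ η in Ioo (0:ℝ) ξ, ENNReal.ofReal ((ξ - η) ^ (-α - 1)) *
        ∫⁻ γ in Ioo η ξ, ENNReal.ofReal (|f γ| * (γ - η) ^ (-α))) ≤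
      (∫⁻ x in Ioi (0:ℝ), ENNReal.ofReal (x ^ (-α) * (1 + x) ^ (-1 - α))) *
        ∫⁻ γ in Ioo (0:ℝ) ξ, ENNReal.ofReal (|f γ| * (ξ - γ) ^ (-(2 * α))) := by
  set B := ∫⁻ x in Ioi (0:ℝ), ENNReal.ofReal (x ^ (-α) * (1 + x) ^ (-1 - α)) with hB
  set k : ℝ → ℝ → ENNReal := fun η γ =>
    ENNReal.ofReal ((ξ - η) ^ (-α - 1)) * ENNReal.ofReal (|f γ| * (γ - η) ^ (-α)) with hk
  have hkm : Measurable (Function.uncurry k) := by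
    apply Measurable.mul (f := fun p : ℝ × ℝ => ENNReal.ofReal ((ξ - p.1) ^ (-α - 1)))
      (g := fun p : ℝ × ℝ => ENNReal.ofReal (|f p.2| * (p.2 - p.1) ^ (-α)))
    · exact ((measurable_const.sub measurable_fst).pow measurable_const).ennreal_ofReal
    · exact (((hf.comp measurable_snd).abs.mul
        ((measurable_snd.sub measurable_fst).pow measurable_const)).ennreal_ofReal)
  set F : ℝ → ℝ → ENNReal := fun η γ => (Ioi η).indicator (fun γ' => k η γ') γ with hF
  have hFm : Measurable (Function.uncurry F) := by
    have : Function.uncurry F = {p : ℝ × ℝ | p.1 < p.2}.indicator (Function.uncurry k) := by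
      funext p
      by_cases h : p.1 < p.2 <;>
        simp [hF, Function.uncurry, indicator_apply, mem_Ioi, mem_setOf_eq, h]
    rw [this]
    exact hkm.indicator (measurableSet_lt measurable_fst measurable_snd)
  -- step 1: rewrite LHS
  have step1 : (∫⁻ η in Ioo (0:ℝ) ξ, ENNReal.ofReal ((ξ - η) ^ (-α - 1)) *
        ∫⁻ γ in Ioo η ξ, ENNReal.ofReal (|f γ| * (γ - η) ^ (-α)))
      = ∫⁻ η in Ioo (0:ℝ) ξ, ∫⁻ γ in Ioo (0:ℝ) ξ, F η γ := by
    apply setLIntegral_congr_fun measurableSet_Ioo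
    intro η hη
    beta_reduce
    obtain ⟨hη0, hηξ⟩ := hη
    rw [← lintegral_const_mul _
      (show Measurable (fun γ : ℝ => ENNReal.ofReal (|f γ| * (γ - η) ^ (-α))) from
      ((hf.abs.mul ((measurable_id'.sub_const η).pow measurable_const)).ennreal_ofReal))]
    have : ∫⁻ γ in Ioo (0:ℝ) ξ, F η γ = ∫⁻ γ in Ioi η ∩ Ioo (0:ℝ) ξ, k η γ := by
      rw [hF]
      rw [lintegral_indicator measurableSet_Ioi, Measure.restrict_restrict measurableSet_Ioi]
    rw [this]
    have hset : Ioi η ∩ Ioo (0:ℝ) ξ = Ioo η ξ := by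
      ext x; simp only [mem_inter_iff, mem_Ioi, mem_Ioo]
      constructor
      · rintro ⟨h1, _, h3⟩; exact ⟨h1, h3⟩
      · rintro ⟨h1, h2⟩; exact ⟨h1, by linarith, h2⟩
    rw [hset]
  rw [step1]
  -- step 2: swap
  have step2 : (∫⁻ η in Ioo (0:ℝ) ξ, ∫⁻ γ in Ioo (0:ℝ) ξ, F η γ)
      = ∫⁻ γ in Ioo (0:ℝ) ξ, ∫⁻ η in Ioo (0:ℝ) ξ, F η γ :=
    lintegral_lintegral_swap hFm.aemeasurable
  rw [step2]
  -- step 3: inner integral over η in Ioo 0 γ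
  have step3 : ∀ γ ∈ Ioo (0:ℝ) ξ,
      (∫⁻ η in Ioo (0:ℝ) ξ, F η γ) = ∫⁻ η in Ioo (0:ℝ) γ, k η γ := by
    intro γ hγ
    obtain ⟨hγ0, hγξ⟩ := hγ
    have hflip : ∀ η, F η γ = (Iio γ).indicator (fun η' => k η' γ) η := by
      intro η
      simp only [hF, indicator_apply, mem_Ioi, mem_Iio]
    have hset2 : Iio γ ∩ Ioo (0:ℝ) ξ = Ioo 0 γ := by
      ext x; simp only [mem_inter_iff, mem_Iio, mem_Ioo]
      constructor
      · rintro ⟨h1, h2, _⟩; exact ⟨h2, h1⟩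
      · rintro ⟨h1, h2⟩; exact ⟨h2, h1, by linarith⟩
    simp_rw [hflip]
    rw [lintegral_indicator measurableSet_Iio, Measure.restrict_restrict measurableSet_Iio,
      hset2]
  -- step 4: pointwise bound
  have step4 : ∀ γ ∈ Ioo (0:ℝ) ξ,
      (∫⁻ η in Ioo (0:ℝ) γ, k η γ) ≤ B * ENNReal.ofReal (|f γ| * (ξ - γ) ^ (-(2 * α))) := by
    intro γ hγ
    obtain ⟨hγ0, hγξ⟩ := hγ
    have hkeq : ∀ η, k η γ = ENNReal.ofReal |f γ| *
        (ENNReal.ofReal ((ξ - η) ^ (-α - 1)) * ENNReal.ofReal ((γ - η) ^ (-α))) := by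
      intro η
      simp only [hk]
      rw [ENNReal.ofReal_mul (abs_nonneg _)]
      ring
    simp_rw [hkeq]
    rw [lintegral_const_mul]
    · calc ENNReal.ofReal |f γ| * ∫⁻ η in Ioo (0:ℝ) γ,
          ENNReal.ofReal ((ξ - η) ^ (-α - 1)) * ENNReal.ofReal ((γ - η) ^ (-α))
          ≤ ENNReal.ofReal |f γ| * (B * ENNReal.ofReal ((ξ - γ) ^ (-(2 * α)))) := by
            gcongr
            exact inner_bound α ξ γ hα hγ0 hγξ
        _ = B * ENNReal.ofReal (|f γ| * (ξ - γ) ^ (-(2 * α))) := by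
            rw [ENNReal.ofReal_mul (abs_nonneg _)]
            ring
    · exact (((measurable_const.sub measurable_id).pow measurable_const).ennreal_ofReal.mul
        ((measurable_const.sub measurable_id).pow measurable_const).ennreal_ofReal)
  calc (∫⁻ γ in Ioo (0:ℝ) ξ, ∫⁻ η in Ioo (0:ℝ) ξ, F η γ)
      ≤ ∫⁻ γ in Ioo (0:ℝ) ξ, B * ENNReal.ofReal (|f γ| * (ξ - γ) ^ (-(2 * α))) := by
        apply setLIntegral_mono_ae' measurableSet_Ioo
        filter_upwards with γ hγ
        rw [step3 γ hγ]
        exact step4 γ hγ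
    _ = B * ∫⁻ γ in Ioo (0:ℝ) ξ, ENNReal.ofReal (|f γ| * (ξ - γ) ^ (-(2 * α))) := by
        rw [lintegral_const_mul]
        exact ((hf.abs.mul ((measurable_const.sub measurable_id).pow measurable_const)).ennreal_ofReal)
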